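/- The cardinality of the anticode S_m(r⁺, r⁻) = {x ∈ ℤ^m : (sum of positive coordinates of x) ≤ r⁺ and (sum of absolute values of negative coordinates of x) ≤ r⁻} equals ∑_{j=0}^{min(m, r⁺)} C(m, j)·C(r⁺, j)·C(r⁻ + m − j, m − j). -/

import Mathlib

/-! Auxiliary counting lemmas -/

open Finset

/-- Finiteness of sets of functions with bounded sum. -/
lemma aux_finite {ι : Type*} [Fintype ι] (N : ℕ) {P : (ι → ℕ) → Prop}
    (h : ∀ f, P f → ∑ i, f i ≤ N) : Finite {f : ι → ℕ // P f} := by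
  refine Finite.of_injective
    (fun f => (fun i => (⟨f.1 i, Nat.lt_succ_of_le ?_⟩ : Fin (N + 1)) : ι → Fin (N + 1))) ?_
  · exact le_trans (Finset.single_le_sum (fun i _ => Nat.zero_le _) (mem_univ i)) (h f.1 f.2)
  · intro f g hfg
    ext i
    have := congrFun hfg i
    simpa [Fin.ext_iff] using this

lemma nat_card_sigma {ι : Type*} [Fintype ι] (f : ι → Type*) [∀ i, Finite (f i)] :
    Nat.card (Σ i, f i) = ∑ i, Nat.card (f i) := by
  have : ∀ i, Fintype (f i) := fun i => Fintype.ofFinite (f i)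
  simp [Nat.card_eq_fintype_card, Fintype.card_sigma]

instance aux_finite_le {ι : Type*} [Fintype ι] (N : ℕ) :
    Finite {f : ι → ℕ // ∑ i, f i ≤ N} :=
  aux_finite N (fun _ h => h)

/-- Number of `n`-tuples of naturals with sum at most `N`. -/
lemma card_sum_le_fin (n N : ℕ) :
    Nat.card {f : Fin n → ℕ // ∑ i, f i ≤ N} = (N + n).choose n := by
  induction n generalizing N with
  | zero =>
      haveI : Unique {f : Fin 0 → ℕ // ∑ i, f i ≤ N} :=
        ⟨⟨⟨fun i => i.elim0, by simp⟩⟩, fun a => Subtype.ext (funext fun i => i.elim0)⟩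
      simp [Nat.card_unique]
  | succ n ih =>
      have E : {f : Fin (n + 1) → ℕ // ∑ i, f i ≤ N} ≃
          Σ t : Fin (N + 1), {g : Fin n → ℕ // ∑ i, g i ≤ N - t} := by
        refine ⟨fun f => ⟨⟨f.1 0, ?_⟩, ⟨Fin.tail f.1, ?_⟩⟩,
               fun p => ⟨Fin.cons p.1.1 p.2.1, ?_⟩, ?_, ?_⟩
        · have h0 : f.1 0 ≤ ∑ i, f.1 i := by
            rw [Fin.sum_univ_succ]; exact Nat.le_add_right _ _
          exact Nat.lt_succ_of_le (le_trans h0 f.2)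
        · have := f.2
          rw [Fin.sum_univ_succ] at this
          simp only [Fin.tail]
          omega
        · have := p.2.2
          have ht : (p.1 : ℕ) ≤ N := Nat.lt_succ_iff.mp p.1.2
          rw [Fin.sum_univ_succ]
          simp only [Fin.cons_zero, Fin.cons_succ]
          omega
        · intro f
          exact Subtype.ext (Fin.cons_self_tail f.1)
        · intro p
          refine Sigma.ext ?_ ?_
          · simp
          · refine heq_of_eq (Subtype.ext ?_)
            simp [Fin.tail_cons]
      rw [Nat.card_congr E, nat_card_sigma
        (fun t : Fin (N + 1) => {g : Fin n → ℕ // ∑ i, g i ≤ N - t})]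
      · have : ∀ t : Fin (N + 1),
            Nat.card {g : Fin n → ℕ // ∑ i, g i ≤ N - (t : ℕ)} =
              ((N - (t : ℕ)) + n).choose n := fun t => ih (N - t)
        rw [Fintype.sum_congr _ _ this]
        rw [Fin.sum_univ_eq_sum_range (fun t => ((N - t) + n).choose n) (N + 1)]
        rw [← Finset.sum_range_reflect (fun t => ((N - t) + n).choose n) (N + 1)]
        have : ∀ t ∈ Finset.range (N + 1),
            ((N - (N + 1 - 1 - t)) + n).choose n = (t + n).choose n := by
          intro t ht
          rw [Finset.mem_range] at ht
          congr 2
          omega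
        rw [Finset.sum_congr rfl this, Nat.sum_range_add_choose]
        congr 1

/-- Number of tuples of naturals indexed by a fintype with sum at most `N`. -/
lemma card_sum_le (ι : Type*) [Fintype ι] (N : ℕ) :
    Nat.card {f : ι → ℕ // ∑ i, f i ≤ N} =
      (N + Fintype.card ι).choose (Fintype.card ι) := by
  classical
  set c := Fintype.card ι
  let e : ι ≃ Fin c := Fintype.equivFin ι
  have E : {f : ι → ℕ // ∑ i, f i ≤ N} ≃ {g : Fin c → ℕ // ∑ i, g i ≤ N} := by
    refine Equiv.subtypeEquiv (Equiv.arrowCongr e (Equiv.refl ℕ)) ?_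
    intro f
    simp only [Equiv.arrowCongr_apply, Equiv.refl_apply, Function.comp]
    rw [Equiv.sum_comp e.symm (fun i => f i)]
  rw [Nat.card_congr E, card_sum_le_fin]

/-- Number of tuples of positive naturals with sum at most `r`. -/
lemma card_sum_le_pos (ι : Type*) [Fintype ι] (r : ℕ) :
    Nat.card {f : ι → ℕ // (∀ i, 1 ≤ f i) ∧ ∑ i, f i ≤ r} =
      r.choose (Fintype.card ι) := by
  classical
  set c := Fintype.card ι with hc
  by_cases h : c ≤ r
  · have E : {f : ι → ℕ // (∀ i, 1 ≤ f i) ∧ ∑ i, f i ≤ r} ≃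
        {g : ι → ℕ // ∑ i, g i ≤ r - c} := by
      refine ⟨fun f => ⟨fun i => f.1 i - 1, ?_⟩, fun g => ⟨fun i => g.1 i + 1, ?_, ?_⟩, ?_, ?_⟩
      · have h1 := f.2.1
        have h2 := f.2.2
        show ∑ i, (f.1 i - 1) ≤ r - c
        have e1 : ∑ i, ((f.1 i - 1) + 1) = ∑ i, f.1 i :=
          Finset.sum_congr rfl fun i _ => Nat.sub_add_cancel (h1 i)
        have e2 : ∑ i, ((f.1 i - 1) + 1) = ∑ i, (f.1 i - 1) + c := by
          rw [Finset.sum_add_distrib]; simp [hc]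
        omega
      · intro i; show 1 ≤ g.1 i + 1; omega
      · have h2 := g.2
        show ∑ i, (g.1 i + 1) ≤ r
        have e2 : ∑ i, (g.1 i + 1) = ∑ i, g.1 i + c := by
          rw [Finset.sum_add_distrib]; simp [hc]
        omega
      · intro f
        refine Subtype.ext (funext fun i => ?_)
        have := f.2.1 i
        simp only
        omega
      · intro g
        refine Subtype.ext (funext fun i => ?_)
        simp
    rw [Nat.card_congr E, card_sum_le, ← hc, Nat.sub_add_cancel h]
  · have : IsEmpty {f : ι → ℕ // (∀ i, 1 ≤ f i) ∧ ∑ i, f i ≤ r} := by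
      refine ⟨fun f => ?_⟩
      have h1 := f.2.1
      have h2 := f.2.2
      have : c ≤ ∑ i, f.1 i := by
        calc c = ∑ _i : ι, 1 := by simp [hc]
          _ ≤ ∑ i, f.1 i := Finset.sum_le_sum fun i _ => h1 i
      omega
    rw [Nat.card_of_isEmpty, Nat.choose_eq_zero_of_lt (by omega)]

/-- The cardinality of the anticode `S_m(r⁺, r⁻)`. -/
theorem stmt_6 (m rp rm : ℕ) (hm : 1 ≤ m) :
    Nat.card {x : Fin m → ℤ //
        (∑ i, max (x i) 0) ≤ (rp : ℤ) ∧ (∑ i, max (-x i) 0) ≤ (rm : ℤ)} =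
      ∑ j ∈ Finset.range (min m rp + 1),
        m.choose j * rp.choose j * (rm + m - j).choose (m - j) := by
  classical
  -- Step 1: reduce to pairs of nonnegative integer vectors with disjoint supports
  set M := {p : (Fin m → ℕ) × (Fin m → ℕ) //
      (∀ i, p.1 i = 0 ∨ p.2 i = 0) ∧ (∑ i, p.1 i ≤ rp ∧ ∑ i, p.2 i ≤ rm)} with hM
  have EM : {x : Fin m → ℤ //
        (∑ i, max (x i) 0) ≤ (rp : ℤ) ∧ (∑ i, max (-x i) 0) ≤ (rm : ℤ)} ≃ M := by
    refine ⟨fun x => ⟨(fun i => (x.1 i).toNat, fun i => (-x.1 i).toNat), ?_, ?_, ?_⟩,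
           fun p => ⟨fun i => (p.1.1 i : ℤ) - (p.1.2 i : ℤ), ?_, ?_⟩, ?_, ?_⟩
    · intro i
      show (x.1 i).toNat = 0 ∨ (-x.1 i).toNat = 0
      omega
    · have h1 := x.2.1
      show ∑ i, (x.1 i).toNat ≤ rp
      have : ((∑ i, (x.1 i).toNat : ℕ) : ℤ) = ∑ i, max (x.1 i) 0 := by
        push_cast
        exact Finset.sum_congr rfl fun i _ => Int.toNat_eq_max _
      omega
    · have h2 := x.2.2
      show ∑ i, (-x.1 i).toNat ≤ rm
      have : ((∑ i, (-x.1 i).toNat : ℕ) : ℤ) = ∑ i, max (-x.1 i) 0 := by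
        push_cast
        exact Finset.sum_congr rfl fun i _ => Int.toNat_eq_max _
      omega
    · have hd := p.2.1
      have h1 := p.2.2.1
      show ∑ i, max ((p.1.1 i : ℤ) - (p.1.2 i : ℤ)) 0 ≤ (rp : ℤ)
      have : ∑ i, max ((p.1.1 i : ℤ) - (p.1.2 i : ℤ)) 0 = ((∑ i, p.1.1 i : ℕ) : ℤ) := by
        push_cast
        refine Finset.sum_congr rfl fun i _ => ?_
        rcases hd i with h | h <;> simp [h] <;> omega
      omega
    · have hd := p.2.1
      have h2 := p.2.2.2
      show ∑ i, max (-((p.1.1 i : ℤ) - (p.1.2 i : ℤ))) 0 ≤ (rm : ℤ)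
      have : ∑ i, max (-((p.1.1 i : ℤ) - (p.1.2 i : ℤ))) 0 = ((∑ i, p.1.2 i : ℕ) : ℤ) := by
        push_cast
        refine Finset.sum_congr rfl fun i _ => ?_
        rcases hd i with h | h <;> simp [h] <;> omega
      omega
    · intro x
      refine Subtype.ext (funext fun i => ?_)
      show ((x.1 i).toNat : ℤ) - ((-x.1 i).toNat : ℤ) = x.1 i
      omega
    · intro p
      have hd := p.2.1
      refine Subtype.ext (Prod.ext (funext fun i => ?_) (funext fun i => ?_))
      · show ((p.1.1 i : ℤ) - (p.1.2 i : ℤ)).toNat = p.1.1 i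
        rcases hd i with h | h <;> omega
      · show (-((p.1.1 i : ℤ) - (p.1.2 i : ℤ))).toNat = p.1.2 i
        rcases hd i with h | h <;> omega
  rw [Nat.card_congr EM]
  -- Step 2: fiber over the support of the first component
  have hMfin : Finite M := by
    rw [hM]
    refine Finite.of_injective (fun p =>
      ((fun i => (⟨p.1.1 i, Nat.lt_succ_of_le ?_⟩ : Fin (rp + 1))),
       (fun i => (⟨p.1.2 i, Nat.lt_succ_of_le ?_⟩ : Fin (rm + 1)))) :
        M → (Fin m → Fin (rp + 1)) × (Fin m → Fin (rm + 1))) ?_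
    · exact le_trans (Finset.single_le_sum (fun i _ => Nat.zero_le _) (mem_univ i)) p.2.2.1
    · exact le_trans (Finset.single_le_sum (fun i _ => Nat.zero_le _) (mem_univ i)) p.2.2.2
    · intro p q hpq
      obtain ⟨h1, h2⟩ := Prod.mk.injEq .. ▸ hpq
      refine Subtype.ext (Prod.ext (funext fun i => ?_) (funext fun i => ?_))
      · simpa [Fin.ext_iff] using congrFun h1 i
      · simpa [Fin.ext_iff] using congrFun h2 i
  let φ : M → Finset (Fin m) := fun p => Finset.univ.filter (fun i => p.1.1 i ≠ 0)
  have Eσ : M ≃ Σ J : Finset (Fin m), {p : M // φ p = J} := Equiv.sigmaFiberEquiv φ |>.symm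
  rw [Nat.card_congr Eσ]
  have hfib : ∀ J : Finset (Fin m), Finite {p : M // φ p = J} :=
    fun J => Subtype.finite
  rw [nat_card_sigma (fun J : Finset (Fin m) => {p : M // φ p = J})]
  -- Step 3: each fiber is a product
  have hfibcard : ∀ J : Finset (Fin m),
      Nat.card {p : M // φ p = J} =
        rp.choose J.card * (rm + (m - J.card)).choose (m - J.card) := by
    intro J
    have EF : {p : M // φ p = J} ≃
        ({a : {i : Fin m // i ∈ J} → ℕ // (∀ i, 1 ≤ a i) ∧ ∑ i, a i ≤ rp} ×
         {b : {i : Fin m // i ∈ Jᶜ} → ℕ // ∑ i, b i ≤ rm}) := by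
      refine ⟨fun p => (⟨fun i => p.1.1.1 i.1, ?_, ?_⟩, ⟨fun i => p.1.1.2 i.1, ?_⟩),
             fun q => ⟨⟨(fun i => if h : i ∈ J then q.1.1 ⟨i, h⟩ else 0,
                         fun i => if h : i ∈ Jᶜ then q.2.1 ⟨i, h⟩ else 0), ?_, ?_, ?_⟩, ?_⟩,
             ?_, ?_⟩
      · -- positivity on J
        intro i
        have hi : i.1 ∈ φ p.1 := by rw [p.2]; exact i.2
        simp only [φ, Finset.mem_filter] at hi
        show 1 ≤ p.1.1.1 i.1
        omega
      · -- sum over J ≤ rp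
        have h1 := p.1.2.2.1
        calc ∑ i : {i : Fin m // i ∈ J}, p.1.1.1 i.1
            = ∑ i ∈ J, p.1.1.1 i := (Finset.sum_subtype J (fun _ => Iff.rfl) _).symm
          _ ≤ ∑ i, p.1.1.1 i := Finset.sum_le_sum_of_subset (Finset.subset_univ J)
          _ ≤ rp := h1
      · -- sum over Jᶜ ≤ rm
        have h2 := p.1.2.2.2
        calc ∑ i : {i : Fin m // i ∈ Jᶜ}, p.1.1.2 i.1
            = ∑ i ∈ Jᶜ, p.1.1.2 i := (Finset.sum_subtype Jᶜ (fun _ => Iff.rfl) _).symm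
          _ ≤ ∑ i, p.1.1.2 i := Finset.sum_le_sum_of_subset (Finset.subset_univ Jᶜ)
          _ ≤ rm := h2
      · -- disjoint supports
        intro i
        by_cases h : i ∈ J
        · right; simp [Finset.mem_compl, h]
        · left; simp [h]
      · -- sum of first ≤ rp
        have h1 := q.1.2.2
        calc ∑ i, (if h : i ∈ J then q.1.1 ⟨i, h⟩ else 0)
            = ∑ i ∈ J, (if h : i ∈ J then q.1.1 ⟨i, h⟩ else 0) := by
              refine (Finset.sum_subset (Finset.subset_univ J) ?_).symm
              intro i _ hi; simp [hi]
          _ = ∑ i : {i : Fin m // i ∈ J}, q.1.1 i := by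
              rw [Finset.sum_subtype J (fun _ => Iff.rfl)
                (fun i => if h : i ∈ J then q.1.1 ⟨i, h⟩ else 0)]
              exact Finset.sum_congr rfl fun i _ => dif_pos i.2
          _ ≤ rp := h1
      · -- sum of second ≤ rm
        have h2 := q.2.2
        calc ∑ i, (if h : i ∈ Jᶜ then q.2.1 ⟨i, h⟩ else 0)
            = ∑ i ∈ Jᶜ, (if h : i ∈ Jᶜ then q.2.1 ⟨i, h⟩ else 0) := by
              refine (Finset.sum_subset (Finset.subset_univ Jᶜ) ?_).symm
              intro i _ hi; simp [hi]
          _ = ∑ i : {i : Fin m // i ∈ Jᶜ}, q.2.1 i := by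
              rw [Finset.sum_subtype Jᶜ (fun _ => Iff.rfl)
                (fun i => if h : i ∈ Jᶜ then q.2.1 ⟨i, h⟩ else 0)]
              exact Finset.sum_congr rfl fun i _ => dif_pos i.2
          _ ≤ rm := h2
      · -- support is J
        ext i
        simp only [φ, Finset.mem_filter, Finset.mem_univ, true_and]
        by_cases h : i ∈ J
        · have := q.1.2.1 ⟨i, h⟩
          simp [h]; omega
        · simp [h]
      · -- left inverse
        intro p
        have hd := p.1.2.1
        have hφ := p.2
        refine Subtype.ext (Subtype.ext (Prod.ext (funext fun i => ?_) (funext fun i => ?_)))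
        · by_cases h : i ∈ J
          · simp [h]
          · have hi : i ∉ φ p.1 := by rw [hφ]; exact h
            simp only [φ, Finset.mem_filter, Finset.mem_univ, true_and, not_not] at hi
            simp [h, hi]
        · by_cases h : i ∈ Jᶜ
          · simp [h]
          · rw [Finset.mem_compl, not_not] at h
            have hi : i ∈ φ p.1 := by rw [hφ]; exact h
            simp only [φ, Finset.mem_filter, Finset.mem_univ, true_and] at hi
            rcases hd i with h' | h'
            · exact absurd h' hi
            · simp [Finset.mem_compl, h, h']
      · -- right inverse
        intro q
        refine Prod.ext (Subtype.ext (funext fun i => ?_)) (Subtype.ext (funext fun i => ?_))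
        · simp [i.2]
        · simp [i.2]
    rw [Nat.card_congr EF, Nat.card_prod, card_sum_le_pos, card_sum_le]
    congr 1
    · congr 1
      simp [Fintype.card_coe]
    · have : Fintype.card {i : Fin m // i ∈ Jᶜ} = m - J.card := by
        rw [Fintype.card_coe, Finset.card_compl, Fintype.card_fin]
      rw [this]
  rw [Fintype.sum_congr _ _ hfibcard]
  -- Step 4: sum over all subsets grouped by cardinality
  have : ∑ J : Finset (Fin m), rp.choose J.card * (rm + (m - J.card)).choose (m - J.card) =
      ∑ j ∈ Finset.range (m + 1),
        m.choose j * (rp.choose j * (rm + (m - j)).choose (m - j)) := by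
    rw [← Finset.powerset_univ, Finset.sum_powerset_apply_card
      (fun j => rp.choose j * (rm + (m - j)).choose (m - j)) (x := (Finset.univ : Finset (Fin m)))]
    simp [Finset.card_univ, smul_eq_mul]
  rw [this]
  -- Step 5: adjust the range and the shape of the summand
  rw [← Finset.sum_subset (Finset.range_subset_range.mpr (by omega :
      min m rp + 1 ≤ m + 1))]
  · refine Finset.sum_congr rfl fun j hj => ?_
    rw [Finset.mem_range] at hj
    have hjm : j ≤ m := le_trans (by omega) (min_le_left m rp)
    have h1 : rm + m - j = rm + (m - j) := by omega
    rw [h1, ← mul_assoc]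
  · intro j hjm hj
    rw [Finset.mem_range] at hjm
    rw [Finset.mem_range, not_lt] at hj
    have : rp < j := by omega
    rw [Nat.choose_eq_zero_of_lt this]
    simp
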